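/- For non-negative integers n and r, the sequence of numbers a_n = -sum_{k=0}^{n} (-1)^{k+1} * k!/(k+1) * S_r(n+r, k+r) has exponential generating function sum_{n>=0} a_n t^n / n! = t * e^{rt} / (e^t - 1) for |t| < 2π. -/

import Mathlib

open Finset Real

/-- Stirling numbers of the second kind `S(n, k)`. -/
def stirling2 : ℕ → ℕ → ℕ
  | 0, 0 => 1
  | 0, _ + 1 => 0
  | _ + 1, 0 => 0
  | n + 1, k + 1 => (k + 1) * stirling2 n (k + 1) + stirling2 n k

/-- The `r`-Stirling numbers of the second kind `S_r(n, k)` of Broder: the number of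
partitions of `{1, …, n}` into `k` non-empty subsets such that `1, …, r` lie in
distinct subsets (with the convention `S_r(n, k) = 0` for `n < r`). -/
def rStirling (r : ℕ) : ℕ → ℕ → ℕ
  | 0, k => if r = 0 ∧ k = 0 then 1 else 0
  | n + 1, k =>
    if n + 1 < r then 0
    else if n + 1 = r then (if k = r then 1 else 0)
    else
      match k with
      | 0 => 0
      | k + 1 => (k + 1) * rStirling r n (k + 1) + rStirling r n k

lemma stirling2_zero (k : ℕ) : stirling2 0 k = if k = 0 then 1 else 0 := by
  cases k <;> rfl
lemma stirling2_succ_zero (n : ℕ) : stirling2 (n+1) 0 = 0 := rfl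
lemma stirling2_succ (n k : ℕ) : stirling2 (n+1) (k+1) = (k + 1) * stirling2 n (k + 1) + stirling2 n k := rfl

lemma stirling2_eq_zero : ∀ n k, n < k → stirling2 n k = 0 := by
  intro n
  induction n with
  | zero => intro k hk; match k, hk with
    | k+1, _ => rfl
  | succ n ih =>
    intro k hk
    match k, hk with
    | k+1, hk =>
      simp [stirling2_succ, ih (k+1) (by omega), ih k (by omega)]

lemma choose_mul_stirling (n : ℕ) : ∀ k, ∑ i ∈ range (n+1), n.choose i * stirling2 i k = stirling2 (n+1) (k+1) := by
  induction n with
  | zero =>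
    intro k
    cases k <;> simp [stirling2_succ, stirling2_zero]
  | succ n ih =>
    intro k
    have key : ∑ i ∈ range (n+2), (n+1).choose i * stirling2 i k
        = stirling2 (n+1) (k+1) + ∑ j ∈ range (n+1), n.choose j * stirling2 (j+1) k := by
      rw [Finset.sum_range_succ' (fun i => (n+1).choose i * stirling2 i k)]
      have split : ∀ j, (n+1).choose (j+1) * stirling2 (j+1) k
          = n.choose j * stirling2 (j+1) k + n.choose (j+1) * stirling2 (j+1) k := by
        intro j; rw [Nat.choose_succ_succ, add_mul]
      rw [Finset.sum_congr rfl (fun j _ => split j), Finset.sum_add_distrib]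
      have hB : ∑ j ∈ range (n+1), n.choose (j+1) * stirling2 (j+1) k
            + Nat.choose n 0 * stirling2 0 k
          = stirling2 (n+1) (k+1) := by
        rw [← Finset.sum_range_succ' (fun i => n.choose i * stirling2 i k),
          Finset.sum_range_succ, Nat.choose_succ_self, zero_mul, add_zero, ih]
      simp only [Nat.choose_zero_right, one_mul] at *
      omega
    rw [key]
    cases k with
    | zero =>
      have : ∀ j ∈ range (n+1), n.choose j * stirling2 (j+1) 0 = 0 := by
        intro j _; rw [stirling2_succ_zero, mul_zero]
      rw [Finset.sum_congr rfl this, Finset.sum_const_zero, add_zero,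
        stirling2_succ (n+1) 0]
      simp [stirling2_succ_zero]
    | succ k =>
      have expand : ∀ j ∈ range (n+1), n.choose j * stirling2 (j+1) (k+1)
          = (k+1) * (n.choose j * stirling2 j (k+1)) + n.choose j * stirling2 j k := by
        intro j _; rw [stirling2_succ]; ring
      rw [Finset.sum_congr rfl expand, Finset.sum_add_distrib, ← Finset.mul_sum,
        ih (k+1), ih k, stirling2_succ (n+1) (k+1)]
      ring

lemma rStirling_zero (r k : ℕ) : rStirling r 0 k = if r = 0 ∧ k = 0 then 1 else 0 := rfl

lemma rStirling_succ_zero (r n : ℕ) (h : r ≤ n) : rStirling r (n+1) 0 = 0 := by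
  rw [rStirling]
  have h1 : ¬ (n + 1 < r) := by omega
  have h2 : ¬ (n + 1 = r) := by omega
  simp [h1, h2]

lemma rStirling_succ_succ (r n k : ℕ) (h : r ≤ n) :
    rStirling r (n+1) (k+1) = (k + 1) * rStirling r n (k + 1) + rStirling r n k := by
  rw [rStirling]
  have h1 : ¬ (n + 1 < r) := by omega
  have h2 : ¬ (n + 1 = r) := by omega
  simp [h1, h2]

lemma rStirling_self (r k : ℕ) : rStirling r r k = if k = r then 1 else 0 := by
  cases r with
  | zero => rw [rStirling_zero]; by_cases h : k = 0 <;> simp [h]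
  | succ m =>
    rw [rStirling.eq_def]
    simp

lemma rStirling_k_lt (r : ℕ) : ∀ n k, k < r → rStirling r n k = 0 := by
  intro n
  induction n with
  | zero => intro k hk; rw [rStirling_zero]; simp; omega
  | succ n ih =>
    intro k hk
    rw [rStirling.eq_def]
    rcases lt_trichotomy (n+1) r with h | h | h
    · simp [h]
    · simp [h]; omega
    · have h1 : ¬ (n + 1 < r) := by omega
      have h2 : ¬ (n + 1 = r) := by omega
      simp only [h1, h2, if_false]
      cases k with
      | zero => rfl
      | succ k => simp [ih (k+1) (by omega), ih k (by omega)]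

lemma rStirling_expand (r n : ℕ) : ∀ k,
    rStirling r (n + r) (k + r) = ∑ j ∈ range (n+1), n.choose j * r ^ (n - j) * stirling2 j k := by
  induction n with
  | zero =>
    intro k
    rw [zero_add, rStirling_self]
    simp [stirling2_zero]
  | succ n ih =>
    intro k
    have hle : r ≤ n + r := by omega
    cases k with
    | zero =>
      -- LHS: rStirling r (n+1+r) r
      cases r with
      | zero =>
        rw [Nat.add_zero, Nat.add_zero, rStirling_succ_zero 0 n (by omega)]
        have : ∀ j ∈ range (n+2), (n+1).choose j * 0 ^ (n + 1 - j) * stirling2 j 0 = 0 := by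
          intro j hj
          rcases Nat.lt_or_ge j (n+1) with h | h
          · rw [zero_pow (by omega)]; ring
          · have hj2 : j = n + 1 := by simp at hj; omega
            subst hj2; rw [stirling2_succ_zero, mul_zero]
        rw [Finset.sum_congr rfl this, Finset.sum_const_zero]
      | succ m =>
        set r := m + 1 with hr
        have hstep : n + 1 + r = (n + r) + 1 := by omega
        have h01 : (0:ℕ) + r = r := by omega
        rw [h01, hstep]
        have hr1 : r = m + 1 := hr
        rw [hr1, rStirling_succ_succ (m+1) (n+(m+1)) m (by omega), ← hr1]
        have h0 : rStirling r (n+r) m = 0 := rStirling_k_lt r _ m (by omega)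
        have ih0 : rStirling r (n+r) r = ∑ j ∈ range (n+1), n.choose j * r ^ (n - j) * stirling2 j 0 := by
          have := ih 0; rwa [Nat.zero_add] at this
        rw [h0, add_zero, ih0]
        have lhs_eq : ∀ j ∈ range (n+1), n.choose j * r ^ (n - j) * stirling2 j 0
            = if j = 0 then r^n else 0 := by
          intro j _
          cases j with
          | zero => simp [stirling2_zero]
          | succ i => simp [stirling2_succ_zero]
        have rhs_eq : ∀ j ∈ range (n+2), (n+1).choose j * r ^ (n + 1 - j) * stirling2 j 0
            = if j = 0 then r^(n+1) else 0 := by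
          intro j _
          cases j with
          | zero => simp [stirling2_zero]
          | succ i => simp [stirling2_succ_zero]
        rw [Finset.sum_congr rfl lhs_eq, Finset.sum_congr rfl rhs_eq,
          Finset.sum_ite_eq' (range (n+1)) 0, Finset.sum_ite_eq' (range (n+2)) 0]
        simp [pow_succ, Nat.mul_comm]
    | succ k =>
      have hstep : n + 1 + r = (n + r) + 1 := by omega
      have hk1 : k + 1 + r = (k + r) + 1 := by omega
      rw [hstep, hk1, rStirling_succ_succ r (n+r) (k+r) hle]
      have hkr : k + r + 1 = (k+1) + r := by omega
      rw [hkr, ih (k+1), ih k]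
      rw [Finset.sum_range_succ' (fun j => (n+1).choose j * r ^ (n + 1 - j) * stirling2 j (k+1))]
      have split : ∀ j ∈ range (n+1), (n+1).choose (j+1) * r ^ (n + 1 - (j+1)) * stirling2 (j+1) (k+1)
          = ((k+1) * (n.choose j * r ^ (n-j) * stirling2 j (k+1)) + n.choose j * r ^ (n-j) * stirling2 j k)
            + n.choose (j+1) * r ^ (n - j) * stirling2 (j+1) (k+1) := by
        intro j _
        have : n + 1 - (j + 1) = n - j := by omega
        rw [this, Nat.choose_succ_succ, stirling2_succ]
        ring
      rw [Finset.sum_congr rfl split, Finset.sum_add_distrib, Finset.sum_add_distrib]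
      have hB : ∑ j ∈ range (n+1), n.choose (j+1) * r ^ (n - j) * stirling2 (j+1) (k+1)
          = r * ∑ j ∈ range (n+1), n.choose j * r ^ (n - j) * stirling2 j (k+1) := by
        have e1 : ∑ j ∈ range (n+1), n.choose (j+1) * r ^ (n - j) * stirling2 (j+1) (k+1)
            = ∑ j ∈ range (n+1), n.choose (j+1) * r ^ (n + 1 - (j+1)) * stirling2 (j+1) (k+1) := by
          refine Finset.sum_congr rfl fun j hj => ?_
          have : n + 1 - (j + 1) = n - j := by omega
          rw [this]
        have e2 : ∑ i ∈ range (n+2), n.choose i * r ^ (n + 1 - i) * stirling2 i (k+1)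
            = ∑ j ∈ range (n+1), n.choose (j+1) * r ^ (n + 1 - (j+1)) * stirling2 (j+1) (k+1) := by
          rw [Finset.sum_range_succ' (fun i => n.choose i * r ^ (n + 1 - i) * stirling2 i (k+1))]
          simp [stirling2_zero]
        have e3 : ∑ i ∈ range (n+2), n.choose i * r ^ (n + 1 - i) * stirling2 i (k+1)
            = ∑ i ∈ range (n+1), n.choose i * r ^ (n + 1 - i) * stirling2 i (k+1) := by
          rw [Finset.sum_range_succ, Nat.choose_succ_self]
          simp
        have e4 : ∑ i ∈ range (n+1), n.choose i * r ^ (n + 1 - i) * stirling2 i (k+1)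
            = r * ∑ i ∈ range (n+1), n.choose i * r ^ (n - i) * stirling2 i (k+1) := by
          rw [Finset.mul_sum]
          refine Finset.sum_congr rfl fun i hi => ?_
          simp only [Finset.mem_range] at hi
          have : n + 1 - i = (n - i) + 1 := by omega
          rw [this, pow_succ]
          ring
        rw [e1, ← e2, e3, e4]
      rw [← Finset.mul_sum, hB]
      have hS0 : stirling2 0 (k+1) = 0 := by simp [stirling2_zero]
      rw [hS0]
      ring

lemma lemE (n : ℕ) :
    ∑ k ∈ range (n+1), (-1:ℚ)^k * k.factorial * stirling2 n (k+1) = if n = 1 then 1 else 0 := by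
  cases n with
  | zero => simp [stirling2_zero]
  | succ n =>
    have expand : ∀ k ∈ range (n+2), (-1:ℚ)^k * k.factorial * stirling2 (n+1) (k+1)
        = (-1:ℚ)^k * (k+1).factorial * stirling2 n (k+1) + (-1:ℚ)^k * k.factorial * stirling2 n k := by
      intro k _
      rw [stirling2_succ n k]
      push_cast [Nat.factorial_succ]
      ring
    rw [Finset.sum_congr rfl expand, Finset.sum_add_distrib]
    have hA : ∑ k ∈ range (n+2), (-1:ℚ)^k * (k+1).factorial * stirling2 n (k+1)
        = ∑ k ∈ range (n+1), (-1:ℚ)^k * (k+1).factorial * stirling2 n (k+1) := by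
      rw [Finset.sum_range_succ, stirling2_eq_zero n (n+2) (by omega)]
      simp
    have hB : ∑ k ∈ range (n+2), (-1:ℚ)^k * k.factorial * stirling2 n k
        = (∑ k ∈ range (n+1), (-1:ℚ)^(k+1) * (k+1).factorial * stirling2 n (k+1))
          + (stirling2 n 0 : ℚ) := by
      rw [Finset.sum_range_succ' (fun k => (-1:ℚ)^k * k.factorial * stirling2 n k)]
      simp [Nat.factorial]
    rw [hA, hB]
    have hcancel : ∀ k ∈ range (n+1), (-1:ℚ)^(k+1) * (k+1).factorial * stirling2 n (k+1)
        = -((-1:ℚ)^k * (k+1).factorial * stirling2 n (k+1)) := by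
      intro k _; ring
    rw [Finset.sum_congr rfl hcancel, Finset.sum_neg_distrib]
    cases n with
    | zero => simp [stirling2_zero]
    | succ m => simp [stirling2_succ_zero]

noncomputable def cQ (n : ℕ) : ℚ :=
  ∑ k ∈ range (n+1), (-1:ℚ)^k * k.factorial / (k+1) * stirling2 n k

lemma cQ_rec (n : ℕ) : ∑ i ∈ range n, (n.choose i : ℚ) * cQ i = if n = 1 then 1 else 0 := by
  cases n with
  | zero => simp
  | succ m =>
    have hc : ∀ i ∈ range (m+2), (cQ i : ℚ)
        = ∑ k ∈ range (m+2), (-1:ℚ)^k * k.factorial / (k+1) * stirling2 i k := by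
      intro i hi
      simp only [Finset.mem_range] at hi
      rw [cQ]
      rw [← Finset.sum_range_add_sum_Ico _ (Nat.le_of_lt_succ (by omega) : i+1 ≤ m+2)]
      have : ∀ k ∈ Finset.Ico (i+1) (m+2), (-1:ℚ)^k * k.factorial / (k+1) * stirling2 i k = 0 := by
        intro k hk
        simp only [Finset.mem_Ico] at hk
        rw [stirling2_eq_zero i k (by omega)]
        simp
      rw [Finset.sum_congr rfl this, Finset.sum_const_zero, add_zero]
    have swap : ∑ i ∈ range (m+2), (↑((m+1).choose i) : ℚ) * cQ i
        = ∑ k ∈ range (m+2), (-1:ℚ)^k * k.factorial / (k+1) * stirling2 (m+2) (k+1) := by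
      rw [Finset.sum_congr rfl (fun i hi => by rw [hc i hi, Finset.mul_sum])]
      rw [Finset.sum_comm]
      refine Finset.sum_congr rfl fun k _ => ?_
      have hcast : ((∑ i ∈ range (m+2), (m+1).choose i * stirling2 i k : ℕ) : ℚ)
          = (stirling2 (m+2) (k+1) : ℚ) := by
        exact_mod_cast congrArg (fun x : ℕ => (x : ℚ)) (choose_mul_stirling (m+1) k)
      push_cast at hcast
      rw [← hcast, Finset.mul_sum]
      refine Finset.sum_congr rfl fun i _ => ?_
      ring
    have final : ∑ i ∈ range (m+1), (↑((m+1).choose i) : ℚ) * cQ i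
        = ∑ k ∈ range (m+2), (-1:ℚ)^k * k.factorial * stirling2 (m+1) (k+1) := by
      have e1 : ∑ i ∈ range (m+1), (↑((m+1).choose i) : ℚ) * cQ i
          = ∑ i ∈ range (m+2), (↑((m+1).choose i) : ℚ) * cQ i - cQ (m+1) := by
        conv_rhs => rw [Finset.sum_range_succ]
        simp
      rw [e1, swap, hc (m+1) (by simp), ← Finset.sum_sub_distrib]
      refine Finset.sum_congr rfl fun k _ => ?_
      rw [stirling2_succ (m+1) k]
      have hk : ((k:ℚ) + 1) ≠ 0 := by positivity
      push_cast
      field_simp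
      ring
    rw [final, lemE (m+1)]

lemma cQ_eq_bernoulli (n : ℕ) : cQ n = bernoulli n := by
  induction n using Nat.strong_induction_on with
  | _ n ih =>
    have h3 : ∑ i ∈ range (n+1), ((n+1).choose i : ℚ) * (cQ i - bernoulli i) = 0 := by
      have : ∀ i ∈ range (n+1), ((n+1).choose i : ℚ) * (cQ i - bernoulli i)
          = ((n+1).choose i : ℚ) * cQ i - ((n+1).choose i : ℚ) * bernoulli i := fun i _ => by ring
      rw [Finset.sum_congr rfl this, Finset.sum_sub_distrib, cQ_rec (n+1), sum_bernoulli (n+1)]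
      ring
    rw [Finset.sum_range_succ] at h3
    have h4 : ∑ i ∈ range n, ((n+1).choose i : ℚ) * (cQ i - bernoulli i) = 0 :=
      Finset.sum_eq_zero fun i hi => by rw [ih i (Finset.mem_range.mp hi), sub_self, mul_zero]
    rw [h4, zero_add, Nat.choose_succ_self_right] at h3
    have hne : ((n+1 : ℕ) : ℚ) ≠ 0 := by positivity
    rcases mul_eq_zero.mp h3 with h | h
    · exact absurd h hne
    · linarith [sub_eq_zero.mp h]

lemma abs_bernoulli_le (n : ℕ) : |(bernoulli n : ℝ)| ≤ 4 * n.factorial / (2*π)^n := by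
  rcases Nat.even_or_odd n with he | ho
  · rcases n with _ | n
    · norm_num [bernoulli_zero]
    · obtain ⟨k, hk⟩ := he
      have hkpos : k ≠ 0 := by omega
      rw [hk]
      have h2k : n + 1 = 2 * k := by omega
      rw [← Nat.two_mul] at hk ⊢
      rw [h2k] at *
      have hzeta := hasSum_zeta_nat hkpos
      have hz2 := hasSum_zeta_two
      have hle : ∑' i : ℕ, 1/(i:ℝ)^(2*k) ≤ π^2/6 := by
        rw [← hz2.tsum_eq]
        refine hzeta.summable.tsum_le_tsum (fun i => ?_) hz2.summable
        rcases i with _ | i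
        · simp [zero_pow, hkpos]
        · gcongr
          · exact_mod_cast Nat.one_le_iff_ne_zero.mpr (Nat.succ_ne_zero i)
          · omega
      have hnonneg : (0:ℝ) ≤ ∑' i : ℕ, 1/(i:ℝ)^(2*k) :=
        tsum_nonneg fun i => by positivity
      rw [hzeta.tsum_eq] at hle hnonneg
      have hfac : (0:ℝ) < (2*k).factorial := by positivity
      have hpi : (0:ℝ) < π := Real.pi_pos
      have habs : |(bernoulli (2*k) : ℝ)| * (2^(2*k-1) * π^(2*k)) / (2*k).factorial ≤ π^2/6 := by
        have : |(bernoulli (2*k) : ℝ)| * (2^(2*k-1) * π^(2*k)) / (2*k).factorial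
            = |(-1:ℝ)^(k+1) * 2^(2*k-1) * π^(2*k) * (bernoulli (2*k):ℝ) / (2*k).factorial| := by
          have h1 : |(-1:ℝ)^(k+1)| = 1 := by simp
          rw [abs_div, abs_mul, abs_mul, abs_mul, h1, one_mul, abs_pow, abs_two,
            abs_of_pos (pow_pos hpi _), Nat.abs_cast]
          ring
        rw [this, abs_of_nonneg hnonneg]
        exact hle
      have hpisq : π^2 ≤ 12 := by nlinarith [Real.pi_lt_d2, hpi]
      have h2 : |(bernoulli (2*k) : ℝ)| * (2^(2*k-1) * π^(2*k)) / (2*k).factorial ≤ 2 := by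
        nlinarith
      have hpow : (2*π)^(2*k) = 2 * (2^(2*k-1) * π^(2*k)) := by
        rw [mul_pow]
        have : (2:ℝ)^(2*k) = 2 * 2^(2*k-1) := by
          rw [← pow_succ']
          congr 1
          omega
        rw [this]
        ring
      rw [div_le_iff₀ hfac] at h2
      rw [hpow, le_div_iff₀ (by positivity : (0:ℝ) < 2 * (2^(2*k-1) * π^(2*k)))]
      nlinarith
  · rcases Nat.lt_or_ge n 2 with hn | hn
    · have : n = 1 := by rcases ho with ⟨m, hm⟩; omega
      subst this
      rw [bernoulli_one]
      have : |((-1/2 : ℚ) : ℝ)| = 1/2 := by norm_num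
      rw [this, pow_one]
      rw [div_le_div_iff₀ (by norm_num) (by positivity)]
      simp [Nat.factorial]
      nlinarith [Real.pi_le_four]
    · have hne : n ≠ 1 := by omega
      rw [bernoulli_eq_bernoulli'_of_ne_one hne,
        bernoulli'_eq_zero_of_odd ho (by omega)]
      simp
      positivity

lemma summable_bernoulli_norm {t : ℝ} (ht : |t| < 2*π) :
    Summable (fun n : ℕ => ‖(bernoulli n : ℝ) * t^n / n.factorial‖) := by
  have hpi : (0:ℝ) < 2*π := by positivity
  have hq : |t| / (2*π) < 1 := by rw [div_lt_one hpi]; exact ht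
  have hq0 : 0 ≤ |t| / (2*π) := by positivity
  refine Summable.of_nonneg_of_le (fun n => norm_nonneg _)
    (fun n => ?_) (((summable_geometric_of_lt_one hq0 hq).mul_left 4))
  have hfac : (0:ℝ) < n.factorial := by positivity
  calc ‖(bernoulli n : ℝ) * t^n / n.factorial‖
      = |(bernoulli n : ℝ)| * |t|^n / n.factorial := by
        rw [norm_div, norm_mul, Real.norm_eq_abs, Real.norm_eq_abs, Real.norm_eq_abs,
          abs_pow, Nat.abs_cast]
    _ ≤ (4 * n.factorial / (2*π)^n) * |t|^n / n.factorial := by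
        gcongr
        exact abs_bernoulli_le n
    _ = 4 * (|t| / (2*π))^n := by
        rw [div_pow]
        field_simp

lemma hasSum_exp_real (x : ℝ) : HasSum (fun n : ℕ => x^n / n.factorial) (Real.exp x) := by
  rw [Real.exp_eq_exp_ℝ]
  exact NormedSpace.expSeries_div_hasSum_exp x

lemma hasSum_bernoulli_real {t : ℝ} (ht : |t| < 2*π) (ht0 : t ≠ 0) :
    HasSum (fun n : ℕ => (bernoulli n : ℝ) * t^n / n.factorial) (t / (Real.exp t - 1)) := by
  have hf := summable_bernoulli_norm ht
  have hg : Summable (fun n : ℕ => ‖t^n / n.factorial‖) := by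
    have := Real.summable_pow_div_factorial |t|
    refine this.congr fun n => ?_
    rw [norm_div, Real.norm_eq_abs, Real.norm_eq_abs, abs_pow, Nat.abs_cast]
  have hfs : Summable (fun n : ℕ => (bernoulli n : ℝ) * t^n / n.factorial) := hf.of_norm
  have cauchy := tsum_mul_tsum_eq_tsum_sum_range_of_summable_norm hf hg
  rw [(hasSum_exp_real t).tsum_eq] at cauchy
  -- rewrite the RHS terms
  have inner : ∀ n : ℕ, ∑ k ∈ range (n+1), (bernoulli k : ℝ) * t^k / k.factorial * (t^(n-k) / (n-k).factorial)
      = ((bernoulli n : ℝ) + if n = 1 then 1 else 0) * t^n / n.factorial := by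
    intro n
    have e1 : ∀ k ∈ range (n+1), (bernoulli k : ℝ) * t^k / k.factorial * (t^(n-k) / (n-k).factorial)
        = ((n.choose k : ℝ) * (bernoulli k : ℝ)) * t^n / n.factorial := by
      intro k hk
      simp only [Finset.mem_range] at hk
      have hkn : k ≤ n := by omega
      have hfact : (n.choose k : ℝ) * k.factorial * (n-k).factorial = n.factorial := by
        exact_mod_cast congrArg (fun x : ℕ => (x:ℝ)) (Nat.choose_mul_factorial_mul_factorial hkn)
      have hpow : t^k * t^(n-k) = t^n := by rw [← pow_add]; congr 1; omega
      have h12 : ((k.factorial : ℝ) * (n-k).factorial) ≠ 0 := by positivity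
      have h3 : (n.factorial : ℝ) ≠ 0 := by positivity
      have key : (1:ℝ)/(k.factorial * (n-k).factorial) = (n.choose k : ℝ)/n.factorial := by
        rw [div_eq_div_iff h12 h3, one_mul]
        linear_combination -hfact
      calc (bernoulli k : ℝ) * t^k / k.factorial * (t^(n-k) / (n-k).factorial)
          = (bernoulli k : ℝ) * (t^k * t^(n-k)) * ((1:ℝ)/(k.factorial * (n-k).factorial)) := by
            ring
        _ = (bernoulli k : ℝ) * t^n * ((n.choose k : ℝ)/n.factorial) := by rw [hpow, key]
        _ = ((n.choose k : ℝ) * (bernoulli k : ℝ)) * t^n / n.factorial := by ring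
    rw [Finset.sum_congr rfl e1, ← Finset.sum_div, ← Finset.sum_mul]
    congr 2
    have : ∑ k ∈ range (n+1), ((n.choose k : ℚ)) * (bernoulli k)
        = bernoulli n + if n = 1 then 1 else 0 := by
      rw [Finset.sum_range_succ, sum_bernoulli n, Nat.choose_self]
      push_cast
      ring
    calc (∑ i ∈ range (n + 1), (↑(n.choose i) : ℝ) * (bernoulli i : ℝ))
        = ((∑ k ∈ range (n + 1), ((n.choose k : ℚ)) * bernoulli k : ℚ) : ℝ) := by push_cast; rfl
      _ = (((bernoulli n + if n = 1 then 1 else 0 : ℚ)) : ℝ) := by rw [this]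
      _ = ((bernoulli n : ℝ) + if n = 1 then 1 else 0) := by
          by_cases h : n = 1 <;> simp [h]
  rw [tsum_congr inner] at cauchy
  have split : ∑' n : ℕ, ((bernoulli n : ℝ) + if n = 1 then 1 else 0) * t^n / n.factorial
      = (∑' n : ℕ, (bernoulli n : ℝ) * t^n / n.factorial) + t := by
    have e2 : ∀ n : ℕ, ((bernoulli n : ℝ) + if n = 1 then 1 else 0) * t^n / n.factorial
        = (bernoulli n : ℝ) * t^n / n.factorial + (if n = 1 then t^n / n.factorial else 0) := by
      intro n
      by_cases h : n = 1 <;> simp [h] <;> ring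
    rw [tsum_congr e2, Summable.tsum_add hfs]
    · congr 1
      rw [tsum_eq_single 1 (fun b hb => by simp [if_neg hb])]
      simp [Nat.factorial]
    · exact summable_of_ne_finset_zero (s := {1}) fun b hb => by
        simp only [Finset.mem_singleton] at hb
        simp [if_neg hb]
  rw [split] at cauchy
  have hexp1 : Real.exp t - 1 ≠ 0 := by
    intro h
    have h2 : Real.exp t = 1 := by linarith
    rw [Real.exp_eq_one_iff] at h2
    exact ht0 h2
  have : (∑' n : ℕ, (bernoulli n : ℝ) * t^n / n.factorial) = t / (Real.exp t - 1) := by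
    rw [eq_div_iff hexp1]
    nlinarith [cauchy]
  exact this ▸ hfs.hasSum

lemma hasSum_step (x t : ℝ) :
    HasSum (fun n : ℕ => (n:ℝ) * x^(n-1) * t^n / n.factorial) (t * Real.exp (x*t)) := by
  have h1 : HasSum (fun m : ℕ => t * ((x*t)^m / m.factorial)) (t * Real.exp (x*t)) :=
    (hasSum_exp_real (x*t)).mul_left t
  have h2 : (fun m : ℕ => t * ((x*t)^m / m.factorial))
      = fun m : ℕ => ((m+1 : ℕ):ℝ) * x^((m+1)-1) * t^(m+1) / (m+1).factorial := by
    funext m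
    have : ((m+1).factorial : ℝ) = (m+1) * m.factorial := by
      rw [Nat.factorial_succ]; push_cast; ring
    rw [this]
    have hm : ((m:ℝ)+1) ≠ 0 := by positivity
    have hf : (m.factorial : ℝ) ≠ 0 := by positivity
    field_simp
    rw [mul_pow]
    push_cast
    ring
  rw [h2] at h1
  have := (hasSum_nat_add_iff (f := fun n : ℕ => (n:ℝ) * x^(n-1) * t^n / n.factorial) 1).mp h1
  simpa using this

lemma hasSum_bernoulli_poly {t : ℝ} (ht : |t| < 2*π) (ht0 : t ≠ 0) (r : ℕ) :
    HasSum (fun n : ℕ => (((Polynomial.bernoulli n).eval (r:ℚ) : ℚ) : ℝ) * t^n / n.factorial)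
      (t * Real.exp (r*t) / (Real.exp t - 1)) := by
  have hexp1 : Real.exp t - 1 ≠ 0 := by
    intro h
    have h2 : Real.exp t = 1 := by linarith
    rw [Real.exp_eq_one_iff] at h2
    exact ht0 h2
  induction r with
  | zero =>
    simp only [Nat.cast_zero, Polynomial.bernoulli_eval_zero, zero_mul, Real.exp_zero, mul_one]
    exact hasSum_bernoulli_real ht ht0
  | succ r ih =>
    have heval : ∀ n : ℕ, ((Polynomial.bernoulli n).eval ((r+1 : ℕ):ℚ))
        = (Polynomial.bernoulli n).eval (r:ℚ) + (n:ℚ) * (r:ℚ)^(n-1) := by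
      intro n
      have := Polynomial.bernoulli_eval_one_add n (r:ℚ)
      push_cast
      rw [add_comm (r:ℚ) 1]
      exact this
    have hfun : (fun n : ℕ => (((Polynomial.bernoulli n).eval ((r+1:ℕ):ℚ) : ℚ) : ℝ) * t^n / n.factorial)
        = fun n : ℕ => (((Polynomial.bernoulli n).eval (r:ℚ) : ℚ) : ℝ) * t^n / n.factorial
          + (n:ℝ) * (r:ℝ)^(n-1) * t^n / n.factorial := by
      funext n
      rw [heval n]
      push_cast
      ring
    rw [hfun]
    have hsum := ih.add (hasSum_step (r:ℝ) t)
    convert hsum using 1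
    push_cast
    rw [div_add' _ _ _ hexp1]
    rw [show ((r:ℝ)+1)*t = (r:ℝ)*t + t by ring, Real.exp_add]
    ring


lemma key_eval (r n : ℕ) :
    ∑ k ∈ range (n+1), (-1:ℚ)^k * k.factorial / (k+1) * rStirling r (n+r) (k+r)
      = (Polynomial.bernoulli n).eval (r:ℚ) := by
  have e1 : ∀ k ∈ range (n+1), (-1:ℚ)^k * k.factorial / (k+1) * rStirling r (n+r) (k+r)
      = ∑ j ∈ range (n+1), ((n.choose j : ℚ) * (r:ℚ)^(n-j)) * ((-1:ℚ)^k * k.factorial / (k+1) * stirling2 j k) := by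
    intro k _
    rw [rStirling_expand r n k]
    push_cast
    rw [Finset.mul_sum]
    exact Finset.sum_congr rfl fun j _ => by ring
  rw [Finset.sum_congr rfl e1, Finset.sum_comm]
  have e2 : ∀ j ∈ range (n+1),
      ∑ k ∈ range (n+1), ((n.choose j : ℚ) * (r:ℚ)^(n-j)) * ((-1:ℚ)^k * k.factorial / (k+1) * stirling2 j k)
      = ((n.choose j : ℚ) * (r:ℚ)^(n-j)) * bernoulli j := by
    intro j hj
    simp only [Finset.mem_range] at hj
    rw [← Finset.mul_sum]
    congr 1
    rw [← cQ_eq_bernoulli j, cQ,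
      ← Finset.sum_range_add_sum_Ico _ (show j+1 ≤ n+1 by omega)]
    have hz : ∀ k ∈ Finset.Ico (j+1) (n+1), (-1:ℚ)^k * k.factorial / (k+1) * stirling2 j k = 0 := by
      intro k hk
      simp only [Finset.mem_Ico] at hk
      rw [stirling2_eq_zero j k (by omega)]
      simp
    rw [Finset.sum_congr rfl hz, Finset.sum_const_zero, add_zero]
  rw [Finset.sum_congr rfl e2, Polynomial.bernoulli, Polynomial.eval_finset_sum]
  refine Finset.sum_congr rfl fun i _ => ?_
  rw [Polynomial.eval_monomial]
  ring

theorem egf_neg_alt_sum (r : ℕ) (t : ℝ) (ht : |t| < 2 * Real.pi) (ht0 : t ≠ 0) :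
    HasSum
      (fun n : ℕ =>
        (-(∑ k ∈ Finset.range (n + 1),
            (-1 : ℝ) ^ (k + 1) * (Nat.factorial k : ℝ) / (k + 1) *
              rStirling r (n + r) (k + r))) * t ^ n / Nat.factorial n)
      (t * Real.exp (r * t) / (Real.exp t - 1)) := by
  have hfun : (fun n : ℕ =>
        (-(∑ k ∈ Finset.range (n + 1),
            (-1 : ℝ) ^ (k + 1) * (Nat.factorial k : ℝ) / (k + 1) *
              rStirling r (n + r) (k + r))) * t ^ n / Nat.factorial n)
      = fun n : ℕ => (((Polynomial.bernoulli n).eval (r:ℚ) : ℚ) : ℝ) * t^n / n.factorial := by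
    funext n
    congr 1
    congr 1
    rw [← key_eval r n]
    push_cast
    rw [← Finset.sum_neg_distrib]
    exact Finset.sum_congr rfl fun k _ => by ring
  rw [hfun]
  exact hasSum_bernoulli_poly ht ht0 r
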